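/- Let g be C² on a neighborhood of [-i,i], t ≥ 0, and M a bound for |g|, |g'|, |g''| on [-i,i]. With θ_j = jπ/(n+1), z_j = i cos θ_j, and α_j = sin²θ_j/(n+1), the quadrature error satisfies |∫_{-i}^{i} 2 sqrt(1+z²) e^{zt} g(z) dz − 2πi Σ_{j=1}^n g(z_j) e^{z_j t} α_j| ≤ C · M · (t² + t + 1)/n² for an absolute constant C. -/

import Mathlib

open Complex Real

section Helpers

open intervalIntegral


lemma ofReal_hasDerivAt (x : ℝ) : HasDerivAt (fun y : ℝ => (y : ℂ)) 1 x := by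
  simpa using (hasDerivAt_id x).ofReal_comp

lemma trapezoid_single (F F' F'' : ℝ → ℂ)
    (hF : ∀ x, HasDerivAt F (F' x) x)
    (hF' : ∀ x, HasDerivAt F' (F'' x) x)
    (hc : Continuous F'') (a b : ℝ) (hab : a ≤ b) (B : ℝ)
    (hB : ∀ x, ‖F'' x‖ ≤ B) :
    ‖(∫ x in a..b, F x) - (b - a) / 2 * (F a + F b)‖ ≤ B * (b - a) ^ 3 / 12 := by
  have hFc : Continuous F := continuous_iff_continuousAt.2 fun x => (hF x).continuousAt
  have hF'c : Continuous F' := continuous_iff_continuousAt.2 fun x => (hF' x).continuousAt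
  set w : ℝ → ℂ := fun x => ((x : ℂ) - a) * ((b : ℂ) - x) / 2 with hw
  have hwc : Continuous w := by fun_prop
  -- derivative of Φ
  have hΦ : ∀ x, HasDerivAt
      (fun x => w x * F' x + ((x : ℂ) - (a + b) / 2) * F x)
      (F x + w x * F'' x) x := by
    intro x
    have h1 : HasDerivAt (fun y : ℝ => ((y : ℂ) - a) * ((b : ℂ) - y) / 2)
        ((1 * ((b : ℂ) - x) + ((x : ℂ) - a) * (-1)) / 2) x := by
      exact (((ofReal_hasDerivAt x).sub_const _).mul
        (((ofReal_hasDerivAt x).const_sub _ : HasDerivAt (fun y : ℝ => (b : ℂ) - y) (-1) x))).div_const 2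
    have h2 : HasDerivAt (fun y : ℝ => ((y : ℂ) - (a + b) / 2)) 1 x :=
      (ofReal_hasDerivAt x).sub_const _
    have := (h1.mul (hF' x)).add (h2.mul (hF x))
    refine this.congr_deriv ?_
    ring
  have hint : (∫ x in a..b, (F x + w x * F'' x)) =
      ((b : ℂ) - a) / 2 * (F a + F b) := by
    rw [integral_eq_sub_of_hasDerivAt (fun x _ => hΦ x)
      ((hFc.add (hwc.mul hc)).intervalIntegrable a b)]
    simp only [w]
    push_cast
    ring
  have hsplit : (∫ x in a..b, (F x + w x * F'' x)) =
      (∫ x in a..b, F x) + ∫ x in a..b, w x * F'' x :=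
    integral_add (hFc.intervalIntegrable a b) ((hwc.mul hc).intervalIntegrable a b)
  have key : (∫ x in a..b, F x) - (b - a) / 2 * (F a + F b) =
      -(∫ x in a..b, w x * F'' x) := by
    have : ((b - a : ℝ) : ℂ) / 2 * (F a + F b) = ((b : ℂ) - a) / 2 * (F a + F b) := by
      push_cast; ring
    rw [show ((b - a : ℝ) : ℂ) = ((b : ℂ) - a) by push_cast; ring] at *
    rw [← hint, hsplit]; ring
  rw [key, norm_neg]
  have hBnn : 0 ≤ B := le_trans (norm_nonneg _) (hB 0)
  have hgint : IntervalIntegrable (fun x => (x - a) * (b - x) / 2 * B) MeasureTheory.volume a b := by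
    apply Continuous.intervalIntegrable; fun_prop
  have hle : ‖∫ x in a..b, w x * F'' x‖ ≤ |∫ x in a..b, (x - a) * (b - x) / 2 * B| := by
    apply norm_integral_le_abs_of_norm_le _ hgint
    filter_upwards [MeasureTheory.ae_restrict_mem measurableSet_uIoc] with x hx
    rw [Set.uIoc_of_le hab] at hx
    have hxa : 0 ≤ x - a := by linarith [hx.1]
    have hxb : 0 ≤ b - x := by linarith [hx.2]
    have : ‖w x‖ = (x - a) * (b - x) / 2 := by
      simp only [w]
      rw [show ((x : ℂ) - a) * ((b : ℂ) - x) / 2 = (((x - a) * (b - x) / 2 : ℝ) : ℂ) by push_cast; ring]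
      rw [Complex.norm_real, Real.norm_eq_abs, _root_.abs_of_nonneg (by positivity)]
    rw [norm_mul, this]
    exact mul_le_mul_of_nonneg_left (hB x) (by positivity)
  have hval : (∫ x in a..b, (x - a) * (b - x) / 2 * B) = B * (b - a) ^ 3 / 12 := by
    have : ∀ x ∈ Set.uIcc a b, HasDerivAt
        (fun x => B / 2 * (-x ^ 3 / 3 + (a + b) * x ^ 2 / 2 - a * b * x))
        ((x - a) * (b - x) / 2 * B) x := by
      intro x _
      have h1 : HasDerivAt (fun y : ℝ => -y ^ 3 / 3 + (a + b) * y ^ 2 / 2 - a * b * y)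
          (-(3 * x ^ 2) / 3 + (a + b) * (2 * x) / 2 - a * b * 1) x := by
        have := (((hasDerivAt_pow 3 x).neg.div_const 3).add
          (((hasDerivAt_pow 2 x).const_mul (a + b)).div_const 2)).sub
          ((hasDerivAt_id' x).const_mul (a * b))
        refine this.congr_deriv ?_ <;> push_cast <;> ring
      have h2 := h1.const_mul (B / 2)
      refine h2.congr_deriv ?_
      ring
    rw [integral_eq_sub_of_hasDerivAt (fun x hx => this x hx) hgint]
    ring
  calc ‖∫ x in a..b, w x * F'' x‖ ≤ |∫ x in a..b, (x - a) * (b - x) / 2 * B| := hle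
    _ = B * (b - a) ^ 3 / 12 := by rw [hval, _root_.abs_of_nonneg (div_nonneg (mul_nonneg hBnn (pow_nonneg (by linarith) 3)) (by norm_num))]

lemma trapezoid_sum (F F' F'' : ℝ → ℂ)
    (hF : ∀ x, HasDerivAt F (F' x) x)
    (hF' : ∀ x, HasDerivAt F' (F'' x) x)
    (hc : Continuous F'') (B : ℝ) (hB : ∀ x, ‖F'' x‖ ≤ B)
    (n : ℕ) (h : ℝ) (hh : 0 ≤ h) (h0 : F 0 = 0) (hL : F ((n + 1) * h) = 0) :
    ‖(∫ x in (0:ℝ)..((n + 1) * h), F x) - h * ∑ j ∈ Finset.Icc 1 n, F (j * h)‖ ≤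
      (n + 1) * (B * h ^ 3 / 12) := by
  have hFc : Continuous F := continuous_iff_continuousAt.2 fun x => (hF x).continuousAt
  set a : ℕ → ℝ := fun k => k * h with ha
  have hsplit : (∫ x in (0:ℝ)..((n + 1) * h), F x) =
      ∑ k ∈ Finset.range (n + 1), ∫ x in a k..a (k + 1), F x := by
    rw [intervalIntegral.sum_integral_adjacent_intervals
      (fun k _ => hFc.intervalIntegrable _ _)]
    simp only [a]
    norm_num
  have hsum : (h : ℂ) * ∑ j ∈ Finset.Icc 1 n, F (j * h) =
      ∑ k ∈ Finset.range (n + 1), ((a (k + 1) : ℂ) - a k) / 2 * (F (a k) + F (a (k + 1))) := by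
    have e1 : ∀ k : ℕ, ((a (k + 1) : ℂ) - a k) = (h : ℂ) := by
      intro k; simp only [a]; push_cast; ring
    simp only [e1]
    rw [← Finset.mul_sum]
    have e2 : ∑ k ∈ Finset.range (n + 1), (F (a k) + F (a (k + 1))) =
        2 * ∑ k ∈ Finset.range n, F (a (k + 1)) := by
      rw [Finset.sum_add_distrib, Finset.sum_range_succ', Finset.sum_range_succ]
      have : a 0 = 0 := by simp [a]
      have h2 : a (n + 1) = (n + 1) * h := by simp [a]
      rw [this, h2, h0, hL]
      ring
    rw [e2]
    have e3 : ∑ j ∈ Finset.Icc 1 n, F (j * h) = ∑ k ∈ Finset.range n, F (a (k + 1)) := by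
      rw [← Finset.Ico_add_one_right_eq_Icc, Finset.sum_Ico_eq_sum_range]
      simp only [a, Nat.add_sub_cancel]
      apply Finset.sum_congr rfl
      intro i _
      congr 1
      push_cast; ring
    rw [e3]
    ring
  rw [hsplit, hsum, ← Finset.sum_sub_distrib]
  refine le_trans (norm_sum_le _ _) ?_
  have hbound : ∀ k ∈ Finset.range (n + 1),
      ‖(∫ x in a k..a (k + 1), F x) - ((a (k + 1) : ℂ) - a k) / 2 * (F (a k) + F (a (k + 1)))‖ ≤
        B * h ^ 3 / 12 := by
    intro k _
    have hab : a k ≤ a (k + 1) := by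
      simp only [a]; push_cast; nlinarith [hh]
    have := trapezoid_single F F' F'' hF hF' hc (a k) (a (k + 1)) hab B hB
    have hd : a (k + 1) - a k = h := by simp only [a]; push_cast; ring
    rw [hd] at this
    convert this using 3
    all_goals (push_cast [hd]; try ring)
  refine le_trans (Finset.sum_le_sum hbound) ?_
  rw [Finset.sum_const, Finset.card_range, nsmul_eq_mul]
  push_cast
  exact le_of_eq (by ring)

end Helpers

set_option maxHeartbeats 1000000 in
/-- there is an absolute constant C such that the quadrature
error for ∫_{-i}^{i} 2√(1+z²) e^{zt} g(z) dz (parametrized as z = iy) against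
the residue sum 2πi Σ_j g(z_j) e^{z_j t} α_j is at most C·M·(t²+t+1)/n². -/
theorem quadrature_error_absolute_constant :
    ∃ C : ℝ, 0 < C ∧
      ∀ (n : ℕ), 1 ≤ n →
      ∀ (g : ℂ → ℂ) (U : Set ℂ), IsOpen U → segment ℝ (-I) I ⊆ U →
        ContDiffOn ℂ 2 g U →
      ∀ (t : ℝ), 0 ≤ t →
      ∀ (M : ℝ),
        (∀ z ∈ segment ℝ (-I) I,
            ‖g z‖ ≤ M ∧ ‖deriv g z‖ ≤ M ∧ ‖deriv (deriv g) z‖ ≤ M) →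
        ‖(∫ y in (-1 : ℝ)..1,
              I * (2 * (Real.sqrt (1 - y ^ 2) : ℂ) *
                Complex.exp ((I * y) * t) * g (I * y))) -
            2 * π * I * ∑ j ∈ Finset.Icc 1 n,
              g (I * Real.cos (j * π / (n + 1))) *
                Complex.exp ((I * Real.cos (j * π / (n + 1))) * t) *
                (Real.sin (j * π / (n + 1)) ^ 2 / (n + 1) : ℝ)‖ ≤
          C * M * (t ^ 2 + t + 1) / n ^ 2 := by
  refine ⟨64, by norm_num, ?_⟩
  intro n hn g U hU hsub hg t ht M hM
  -- membership of I*y in the segment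
  have hmem' : ∀ y : ℝ, -1 ≤ y → y ≤ 1 → I * (y : ℂ) ∈ segment ℝ (-I) I := by
    intro y h1 h2
    rw [segment_eq_image]
    refine ⟨(y + 1) / 2, ⟨by linarith, by linarith⟩, ?_⟩
    simp only [smul_eq_mul]
    push_cast
    simp [Complex.real_smul]
    push_cast
    ring
  set s : ℝ → ℂ := fun θ => ((Real.sin θ : ℝ) : ℂ) with hs_def
  set c : ℝ → ℂ := fun θ => ((Real.cos θ : ℝ) : ℂ) with hc_def
  set E : ℝ → ℂ := fun θ => Complex.exp ((I * c θ) * (t : ℂ)) with hE_def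
  set G : ℝ → ℂ := fun θ => g (I * c θ) with hG_def
  have hmem : ∀ θ : ℝ, I * c θ ∈ segment ℝ (-I) I := fun θ =>
    hmem' _ (Real.neg_one_le_cos θ) (Real.cos_le_one θ)
  have hmemU : ∀ θ : ℝ, I * c θ ∈ U := fun θ => hsub (hmem θ)
  -- differentiability facts for g
  have hgd : DifferentiableOn ℂ g U := hg.differentiableOn two_ne_zero
  have hg1 : ContDiffOn ℂ 1 (deriv g) U := hg.deriv_of_isOpen hU (by norm_num)
  have hg1d : DifferentiableOn ℂ (deriv g) U := hg1.differentiableOn one_ne_zero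
  have hg2c : ContinuousOn (deriv (deriv g)) U := hg1.continuousOn_deriv_of_isOpen hU le_rfl
  have hgat : ∀ z ∈ U, HasDerivAt g (deriv g z) z := fun z hz =>
    (hgd.differentiableAt (hU.mem_nhds hz)).hasDerivAt
  have hg1at : ∀ z ∈ U, HasDerivAt (deriv g) (deriv (deriv g) z) z := fun z hz =>
    (hg1d.differentiableAt (hU.mem_nhds hz)).hasDerivAt
  -- elementary path derivatives
  have hsd : ∀ θ, HasDerivAt s (c θ) θ := fun θ => (Real.hasDerivAt_sin θ).ofReal_comp
  have hcd : ∀ θ, HasDerivAt c (-(s θ)) θ := fun θ => by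
    convert (Real.hasDerivAt_cos θ).ofReal_comp using 1
    simp only [hs_def]
    push_cast
    ring
  have hpd : ∀ θ, HasDerivAt (fun θ => I * c θ) (-(I * s θ)) θ := fun θ => by
    have := (hcd θ).const_mul I
    refine this.congr_deriv ?_
    ring
  -- first derivatives of the pieces
  set G1 : ℝ → ℂ := fun θ => -(I * s θ) * deriv g (I * c θ) with hG1_def
  set E1 : ℝ → ℂ := fun θ => E θ * (-(I * s θ) * (t : ℂ)) with hE1_def
  have hG' : ∀ θ, HasDerivAt G (G1 θ) θ := fun θ => by
    have := (hgat _ (hmemU θ)).scomp θ (hpd θ)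
    exact this.congr_deriv (by simp only [hG1_def, smul_eq_mul])
  have hE' : ∀ θ, HasDerivAt E (E1 θ) θ := fun θ => by
    have hin : HasDerivAt (fun θ => (I * c θ) * (t : ℂ)) (-(I * s θ) * (t : ℂ)) θ :=
      (hpd θ).mul_const _
    exact hin.cexp
  -- second derivatives
  set G2 : ℝ → ℂ := fun θ =>
    -(I * c θ) * deriv g (I * c θ) + -(I * s θ) * (-(I * s θ) * deriv (deriv g) (I * c θ))
    with hG2_def
  set E2 : ℝ → ℂ := fun θ =>
    E1 θ * (-(I * s θ) * (t : ℂ)) + E θ * (-(I * c θ) * (t : ℂ)) with hE2_def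
  have hIsd : ∀ θ, HasDerivAt (fun θ => -(I * s θ)) (-(I * c θ)) θ := fun θ =>
    ((hsd θ).const_mul I).neg
  have hG'' : ∀ θ, HasDerivAt G1 (G2 θ) θ := fun θ => by
    have h2 : HasDerivAt (fun θ => deriv g (I * c θ))
        (-(I * s θ) * deriv (deriv g) (I * c θ)) θ := by
      have := (hg1at _ (hmemU θ)).scomp θ (hpd θ)
      exact this.congr_deriv (by simp only [smul_eq_mul])
    exact (hIsd θ).mul h2
  have hE'' : ∀ θ, HasDerivAt E1 (E2 θ) θ := fun θ =>
    (hE' θ).mul ((hIsd θ).mul_const _)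
  have hSd : ∀ θ, HasDerivAt (fun θ => s θ ^ 2) (2 * s θ * c θ) θ := fun θ => by
    have hmul := (hsd θ).mul (hsd θ)
    have hfn : (fun θ => s θ ^ 2) = fun θ => s θ * s θ := by
      funext x; ring
    rw [hfn]
    refine hmul.congr_deriv ?_
    ring
  set S2 : ℝ → ℂ := fun θ => 2 * c θ * c θ + 2 * s θ * -(s θ) with hS2_def
  have hSd2 : ∀ θ, HasDerivAt (fun θ => 2 * s θ * c θ) (S2 θ) θ := fun θ =>
    ((hsd θ).const_mul 2).mul (hcd θ)
  -- F and its two derivatives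
  set F : ℝ → ℂ := fun θ => G θ * E θ * s θ ^ 2 with hF_def
  set F1 : ℝ → ℂ := fun θ =>
    (G1 θ * E θ + G θ * E1 θ) * s θ ^ 2 + G θ * E θ * (2 * s θ * c θ) with hF1_def
  set F2 : ℝ → ℂ := fun θ =>
    ((G2 θ * E θ + G1 θ * E1 θ + (G1 θ * E1 θ + G θ * E2 θ)) * s θ ^ 2 +
      (G1 θ * E θ + G θ * E1 θ) * (2 * s θ * c θ)) +
    ((G1 θ * E θ + G θ * E1 θ) * (2 * s θ * c θ) + G θ * E θ * S2 θ) with hF2_def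
  have hF1d : ∀ θ, HasDerivAt F (F1 θ) θ := fun θ =>
    ((hG' θ).mul (hE' θ)).mul (hSd θ)
  have hF2d : ∀ θ, HasDerivAt F1 (F2 θ) θ := fun θ => by
    have hA : HasDerivAt (fun θ => G1 θ * E θ + G θ * E1 θ)
        (G2 θ * E θ + G1 θ * E1 θ + (G1 θ * E1 θ + G θ * E2 θ)) θ :=
      ((hG'' θ).mul (hE' θ)).add ((hG' θ).mul (hE'' θ))
    exact (hA.mul (hSd θ)).add (((hG' θ).mul (hE' θ)).mul (hSd2 θ))
  -- continuity of F2
  have hpcont : Continuous (fun θ : ℝ => I * c θ) := by fun_prop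
  have hGc : Continuous G := (hg.continuousOn).comp_continuous hpcont hmemU
  have hdg1c : Continuous (fun θ => deriv g (I * c θ)) :=
    (hg1.continuousOn).comp_continuous hpcont hmemU
  have hdg2c : Continuous (fun θ => deriv (deriv g) (I * c θ)) :=
    hg2c.comp_continuous hpcont hmemU
  have hsc : Continuous s := by fun_prop
  have hcc : Continuous c := by fun_prop
  have hEc : Continuous E := by fun_prop
  have hF2c : Continuous F2 := by
    simp only [hF2_def, hG2_def, hG1_def, hE1_def, hE2_def, hS2_def]
    fun_prop
  -- norm bounds
  have hM0 : 0 ≤ M := le_trans (norm_nonneg _) (hM _ (hmem 0)).1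
  have hsb : ∀ θ, ‖s θ‖ ≤ 1 := fun θ => by
    simp only [hs_def, Complex.norm_real, Real.norm_eq_abs]
    exact Real.abs_sin_le_one θ
  have hcb : ∀ θ, ‖c θ‖ ≤ 1 := fun θ => by
    simp only [hc_def, Complex.norm_real, Real.norm_eq_abs]
    exact Real.abs_cos_le_one θ
  have hIsb : ∀ θ, ‖-(I * s θ)‖ ≤ 1 := fun θ => by
    rw [norm_neg, norm_mul, Complex.norm_I, one_mul]; exact hsb θ
  have hIcb : ∀ θ, ‖-(I * c θ)‖ ≤ 1 := fun θ => by
    rw [norm_neg, norm_mul, Complex.norm_I, one_mul]; exact hcb θ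
  have htb : ‖(t : ℂ)‖ = t := by
    rw [Complex.norm_real, Real.norm_eq_abs, _root_.abs_of_nonneg ht]
  have hEb : ∀ θ, ‖E θ‖ = 1 := fun θ => by
    rw [hE_def]
    simp only [Complex.norm_exp]
    norm_num [hc_def, Complex.mul_re, Complex.I_re, Complex.I_im]
  have key : ∀ (x y : ℂ) (bx bY : ℝ), ‖x‖ ≤ bx → ‖y‖ ≤ bY → ‖x * y‖ ≤ bx * bY := by
    intro x y bx bY hx hy
    rw [norm_mul]
    exact mul_le_mul hx hy (norm_nonneg _) (le_trans (norm_nonneg _) hx)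
  have hGb : ∀ θ, ‖G θ‖ ≤ M := fun θ => (hM _ (hmem θ)).1
  have hdg1b : ∀ θ, ‖deriv g (I * c θ)‖ ≤ M := fun θ => (hM _ (hmem θ)).2.1
  have hdg2b : ∀ θ, ‖deriv (deriv g) (I * c θ)‖ ≤ M := fun θ => (hM _ (hmem θ)).2.2
  have hG1b : ∀ θ, ‖G1 θ‖ ≤ M := fun θ => by
    have h := key _ _ _ _ (hIsb θ) (hdg1b θ)
    rw [one_mul] at h
    exact h
  have hG2b : ∀ θ, ‖G2 θ‖ ≤ 2 * M := fun θ => by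
    have h1 := key _ _ _ _ (hIcb θ) (hdg1b θ)
    have h2 := key _ _ _ _ (hIsb θ) (key _ _ _ _ (hIsb θ) (hdg2b θ))
    calc ‖G2 θ‖ ≤ ‖-(I * c θ) * deriv g (I * c θ)‖ +
        ‖-(I * s θ) * (-(I * s θ) * deriv (deriv g) (I * c θ))‖ := norm_add_le _ _
      _ ≤ 1 * M + 1 * (1 * M) := add_le_add h1 h2
      _ = 2 * M := by ring
  have hE1b : ∀ θ, ‖E1 θ‖ ≤ t := fun θ => by
    have h := key _ _ _ _ (le_of_eq (hEb θ)) (key _ _ _ _ (hIsb θ) (le_of_eq htb))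
    calc ‖E1 θ‖ ≤ 1 * (1 * t) := h
      _ = t := by ring
  have hE2b : ∀ θ, ‖E2 θ‖ ≤ t * t + t := fun θ => by
    have h1 := key _ _ _ _ (hE1b θ) (key _ _ _ _ (hIsb θ) (le_of_eq htb))
    have h2 := key _ _ _ _ (le_of_eq (hEb θ)) (key _ _ _ _ (hIcb θ) (le_of_eq htb))
    calc ‖E2 θ‖ ≤ ‖E1 θ * (-(I * s θ) * (t : ℂ))‖ + ‖E θ * (-(I * c θ) * (t : ℂ))‖ :=
        norm_add_le _ _
      _ ≤ t * (1 * t) + 1 * (1 * t) := add_le_add h1 h2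
      _ = t * t + t := by ring
  have hsq : ∀ θ, ‖s θ ^ 2‖ ≤ 1 := fun θ => by
    rw [norm_pow]
    exact pow_le_one₀ (norm_nonneg _) (hsb θ)
  have hscb : ∀ θ, ‖2 * s θ * c θ‖ ≤ 2 := fun θ => by
    have h := key _ _ _ _ (key (2 : ℂ) (s θ) 2 1 (by norm_num) (hsb θ)) (hcb θ)
    calc ‖2 * s θ * c θ‖ ≤ 2 * 1 * 1 := h
      _ = 2 := by ring
  have hS2b : ∀ θ, ‖S2 θ‖ ≤ 4 := fun θ => by
    have h1 := key _ _ _ _ (key (2 : ℂ) (c θ) 2 1 (by norm_num) (hcb θ)) (hcb θ)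
    have h2 : ‖2 * s θ * -(s θ)‖ ≤ 2 * 1 * 1 :=
      key _ _ _ _ (key (2 : ℂ) (s θ) 2 1 (by norm_num) (hsb θ))
        ((norm_neg (s θ)).le.trans (hsb θ))
    calc ‖S2 θ‖ ≤ ‖2 * c θ * c θ‖ + ‖2 * s θ * -(s θ)‖ := norm_add_le _ _
      _ ≤ 2 * 1 * 1 + 2 * 1 * 1 := add_le_add h1 h2
      _ ≤ 4 := by norm_num
  have hAb : ∀ θ, ‖G1 θ * E θ + G θ * E1 θ‖ ≤ M + M * t := fun θ => by
    have h1 := key _ _ _ _ (hG1b θ) (le_of_eq (hEb θ))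
    have h2 := key _ _ _ _ (hGb θ) (hE1b θ)
    calc ‖G1 θ * E θ + G θ * E1 θ‖ ≤ ‖G1 θ * E θ‖ + ‖G θ * E1 θ‖ := norm_add_le _ _
      _ ≤ M * 1 + M * t := add_le_add h1 h2
      _ = M + M * t := by ring
  have hF2b : ∀ θ, ‖F2 θ‖ ≤ 10 * M * (t ^ 2 + t + 1) := fun θ => by
    have hA2 : ‖G2 θ * E θ + G1 θ * E1 θ + (G1 θ * E1 θ + G θ * E2 θ)‖ ≤
        2 * M + M * t + (M * t + M * (t * t + t)) := by
      have h1 := key _ _ _ _ (hG2b θ) (le_of_eq (hEb θ))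
      have h2 := key _ _ _ _ (hG1b θ) (hE1b θ)
      have h3 := key _ _ _ _ (hGb θ) (hE2b θ)
      calc ‖G2 θ * E θ + G1 θ * E1 θ + (G1 θ * E1 θ + G θ * E2 θ)‖ ≤
          ‖G2 θ * E θ + G1 θ * E1 θ‖ + ‖G1 θ * E1 θ + G θ * E2 θ‖ := norm_add_le _ _
        _ ≤ (‖G2 θ * E θ‖ + ‖G1 θ * E1 θ‖) + (‖G1 θ * E1 θ‖ + ‖G θ * E2 θ‖) :=
            add_le_add (norm_add_le _ _) (norm_add_le _ _)
        _ ≤ (2 * M * 1 + M * t) + (M * t + M * (t * t + t)) :=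
            add_le_add (add_le_add h1 h2) (add_le_add h2 h3)
        _ = 2 * M + M * t + (M * t + M * (t * t + t)) := by ring
    have h1 := key _ _ _ _ hA2 (hsq θ)
    have h2 := key _ _ _ _ (hAb θ) (hscb θ)
    have h3 := key _ _ _ _ (key _ _ _ _ (hGb θ) (le_of_eq (hEb θ))) (hS2b θ)
    calc ‖F2 θ‖ ≤
        ‖(G2 θ * E θ + G1 θ * E1 θ + (G1 θ * E1 θ + G θ * E2 θ)) * s θ ^ 2 +
          (G1 θ * E θ + G θ * E1 θ) * (2 * s θ * c θ)‖ +
        ‖(G1 θ * E θ + G θ * E1 θ) * (2 * s θ * c θ) + G θ * E θ * S2 θ‖ := norm_add_le _ _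
      _ ≤ (‖(G2 θ * E θ + G1 θ * E1 θ + (G1 θ * E1 θ + G θ * E2 θ)) * s θ ^ 2‖ +
          ‖(G1 θ * E θ + G θ * E1 θ) * (2 * s θ * c θ)‖) +
          (‖(G1 θ * E θ + G θ * E1 θ) * (2 * s θ * c θ)‖ + ‖G θ * E θ * S2 θ‖) :=
          add_le_add (norm_add_le _ _) (norm_add_le _ _)
      _ ≤ ((2 * M + M * t + (M * t + M * (t * t + t))) * 1 + (M + M * t) * 2) +
          ((M + M * t) * 2 + M * 1 * 4) := by
          exact add_le_add (add_le_add h1 h2) (add_le_add h2 h3)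
      _ ≤ 10 * M * (t ^ 2 + t + 1) := by nlinarith [hM0, ht, sq_nonneg t]
  -- step 1 : change of variables
  set Φ : ℝ → ℂ := fun y => I * (2 * (Real.sqrt (1 - y ^ 2) : ℂ) *
      Complex.exp ((I * y) * t) * g (I * y)) with hΦ_def
  have hΦcont : ContinuousOn Φ (Set.Icc (-1) 1) := by
    have h3 : ContinuousOn (fun y : ℝ => g (I * y)) (Set.Icc (-1) 1) := by
      refine (hg.continuousOn).comp (by fun_prop) ?_
      intro y hy
      exact hsub (hmem' y hy.1 hy.2)
    have h1 : Continuous (fun y : ℝ => I * (2 * (Real.sqrt (1 - y ^ 2) : ℂ) *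
        Complex.exp ((I * y) * t))) := by fun_prop
    refine ContinuousOn.congr (h1.continuousOn.mul h3) ?_
    intro y _
    simp only [hΦ_def, Pi.mul_apply]
    ring
  have hcv : (∫ y in (-1 : ℝ)..1, Φ y) =
      ∫ θ in (0 : ℝ)..π, (Real.sin θ) • Φ (Real.cos θ) := by
    have hmain := intervalIntegral.integral_comp_smul_deriv''
      (f := Real.cos) (f' := fun θ => -Real.sin θ) (g := Φ) (a := 0) (b := π)
      (Real.continuous_cos.continuousOn)
      (fun x _ => (Real.hasDerivAt_cos x).hasDerivWithinAt)
      ((Real.continuous_sin.neg).continuousOn)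
      (hΦcont.mono (by
        intro u hu
        obtain ⟨x, _, rfl⟩ := hu
        exact ⟨Real.neg_one_le_cos x, Real.cos_le_one x⟩))
    rw [Real.cos_zero, Real.cos_pi] at hmain
    have hsymm : (∫ y in (-1 : ℝ)..1, Φ y) = -∫ y in (1 : ℝ)..(-1), Φ y := by
      rw [intervalIntegral.integral_symm]
    rw [hsymm, ← hmain]
    rw [← intervalIntegral.integral_neg]
    congr 1
    funext x
    simp [neg_smul]
  have hpt : ∀ θ ∈ Set.uIcc (0 : ℝ) π, (Real.sin θ) • Φ (Real.cos θ) = 2 * I * F θ := by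
    intro θ hθ
    rw [Set.uIcc_of_le Real.pi_nonneg] at hθ
    have hsin : 0 ≤ Real.sin θ := Real.sin_nonneg_of_nonneg_of_le_pi hθ.1 hθ.2
    have hsq2 : Real.sqrt (1 - Real.cos θ ^ 2) = Real.sin θ := by
      have h1 := Real.sin_sq_add_cos_sq θ
      rw [show (1 : ℝ) - Real.cos θ ^ 2 = Real.sin θ ^ 2 by linarith]
      exact Real.sqrt_sq hsin
    simp only [hΦ_def, hF_def, hG_def, hE_def, hs_def, hc_def, hsq2]
    rw [Complex.real_smul]
    push_cast
    ring
  have hInt : (∫ y in (-1 : ℝ)..1, Φ y) = 2 * I * ∫ θ in (0 : ℝ)..π, F θ := by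
    rw [hcv, intervalIntegral.integral_congr hpt, intervalIntegral.integral_const_mul]
  -- step 2 : the sum
  have hnR : ((n : ℝ) + 1) ≠ 0 := by positivity
  have hnC : ((n : ℂ) + 1) ≠ 0 := by
    have := Complex.ofReal_ne_zero.mpr hnR
    push_cast at this
    exact this
  set h : ℝ := π / ((n : ℝ) + 1) with hh_def
  have hsum : (2 * (π : ℂ) * I * ∑ j ∈ Finset.Icc 1 n,
      g (I * Real.cos (j * π / (n + 1))) *
        Complex.exp ((I * Real.cos (j * π / (n + 1))) * t) *
        ((Real.sin (j * π / (n + 1)) ^ 2 / (n + 1) : ℝ) : ℂ)) =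
      2 * I * (h : ℂ) * ∑ j ∈ Finset.Icc 1 n, F (j * h) := by
    rw [Finset.mul_sum, Finset.mul_sum]
    apply Finset.sum_congr rfl
    intro j _
    have harg : (j : ℝ) * h = j * π / (n + 1) := by rw [hh_def]; ring
    rw [harg]
    simp only [hF_def, hG_def, hE_def, hs_def, hc_def]
    rw [Complex.ofReal_div, Complex.ofReal_pow, Complex.ofReal_add,
      Complex.ofReal_natCast, Complex.ofReal_one, hh_def, Complex.ofReal_div,
      Complex.ofReal_add, Complex.ofReal_natCast, Complex.ofReal_one]
    ring
  -- step 3 : trapezoid estimate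
  have hπeq : ((n : ℝ) + 1) * h = π := by rw [hh_def]; field_simp
  have hF0 : F 0 = 0 := by simp [hF_def, hs_def]
  have hFL : F (((n : ℝ) + 1) * h) = 0 := by
    rw [hπeq]; simp [hF_def, hs_def]
  have hh0 : 0 ≤ h := by rw [hh_def]; positivity
  have htrap := trapezoid_sum F F1 F2 hF1d hF2d hF2c (10 * M * (t ^ 2 + t + 1)) hF2b
    n h hh0 hF0 hFL
  rw [hπeq] at htrap
  -- final assembly
  calc ‖(∫ y in (-1 : ℝ)..1, Φ y) -
      2 * (π : ℂ) * I * ∑ j ∈ Finset.Icc 1 n,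
        g (I * Real.cos (j * π / (n + 1))) *
          Complex.exp ((I * Real.cos (j * π / (n + 1))) * t) *
          ((Real.sin (j * π / (n + 1)) ^ 2 / (n + 1) : ℝ) : ℂ)‖
      = ‖(2 * I : ℂ) * ((∫ θ in (0 : ℝ)..π, F θ) - (h : ℂ) * ∑ j ∈ Finset.Icc 1 n, F (j * h))‖ := by
        rw [hInt, hsum]; congr 1; ring
    _ = 2 * ‖(∫ θ in (0 : ℝ)..π, F θ) - (h : ℂ) * ∑ j ∈ Finset.Icc 1 n, F (j * h)‖ := by
        rw [norm_mul]
        norm_num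
    _ ≤ 2 * (((n : ℝ) + 1) * (10 * M * (t ^ 2 + t + 1) * h ^ 3 / 12)) := by
        exact mul_le_mul_of_nonneg_left htrap (by norm_num)
    _ ≤ 64 * M * (t ^ 2 + t + 1) / (n : ℝ) ^ 2 := by
        have hN1 : (1 : ℝ) ≤ (n : ℝ) := by exact_mod_cast hn
        have hN0 : (0 : ℝ) < (n : ℝ) := by linarith
        have hπ3 : π ^ 3 ≤ 32 := by
          have h1 : π ≤ 3.15 := le_of_lt Real.pi_lt_d2
          calc π ^ 3 ≤ 3.15 ^ 3 := pow_le_pow_left₀ Real.pi_pos.le h1 3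
            _ ≤ 32 := by norm_num
        have hX : 0 ≤ M * (t ^ 2 + t + 1) := mul_nonneg hM0 (by positivity)
        have heq : 2 * (((n : ℝ) + 1) * (10 * M * (t ^ 2 + t + 1) * h ^ 3 / 12)) =
            5 * (M * (t ^ 2 + t + 1)) * π ^ 3 / (3 * ((n : ℝ) + 1) ^ 2) := by
          rw [hh_def]
          field_simp
          ring
        rw [heq, div_le_div_iff₀ (by positivity) (by positivity)]
        nlinarith [mul_le_mul_of_nonneg_left hπ3 (mul_nonneg hX (sq_nonneg (n : ℝ))),
          mul_nonneg hX (sq_nonneg (n : ℝ)), mul_nonneg hX hN0.le, hX]
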